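/- The family of strong uniquely solvable puzzles does not satisfy the matroid augmentation property: there exist a width k and strong uniquely solvable puzzles P1, P2 of width k with |P1| < |P2| such that for every row r ∈ P2 \ P1, the puzzle P1 ∪ {r} is not a strong uniquely solvable puzzle. In particular this is witnessed with k = 2 by P1 = {(3,2)} and P2 = {(1,2), (2,3)}. -/
import Mathlib


/-- Exactly two of the three propositions hold. -/
def ExactlyTwo (A B C : Prop) : Prop :=
  (A ∧ B ∧ ¬C) ∨ (A ∧ ¬B ∧ C) ∨ (¬A ∧ B ∧ C)

/-- At least two of the three propositions hold. -/
def AtLeastTwo (A B C : Prop) : Prop :=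
  (A ∧ B) ∨ (A ∧ C) ∨ (B ∧ C)

/-- A puzzle of width `k` is a finite set of rows in `{1,2,3}^k`; we use the
alphabet `Fin 3` whose three elements are denoted `1`, `2`, `3` (`3 = 0`).
`P` is a strong uniquely solvable puzzle (strong USP). -/
def IsSUSP {k : ℕ} (P : Finset (Fin k → Fin 3)) : Prop :=
  ∀ π₁ π₂ π₃ : Equiv.Perm {r // r ∈ P},
    (π₁ = π₂ ∧ π₂ = π₃) ∨
    ∃ (r : {r // r ∈ P}) (c : Fin k),
      ExactlyTwo ((π₁ r).1 c = 1) ((π₂ r).1 c = 2) ((π₃ r).1 c = 3)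

/-- Strong USPs do not satisfy the matroid augmentation property: there are
strong USPs `P₁, P₂` of a common width with `|P₁| < |P₂|` such that `P₁`
cannot be augmented by any row of `P₂ \ P₁`.  In particular this is witnessed
at width `k = 2` by `P₁ = {32}` and `P₂ = {12, 23}`. -/
instance {k : ℕ} (P : Finset (Fin k → Fin 3)) : Decidable (IsSUSP P) := by
  unfold IsSUSP ExactlyTwo
  exact @Fintype.decidableForallFintype _ _
    (fun _ => @Fintype.decidableForallFintype _ _
      (fun _ => Fintype.decidableForallFintype) _) _

theorem susp_not_matroid :
    (∃ (k : ℕ) (P₁ P₂ : Finset (Fin k → Fin 3)),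
      IsSUSP P₁ ∧ IsSUSP P₂ ∧ P₁.card < P₂.card ∧
      ∀ r ∈ P₂ \ P₁, ¬ IsSUSP (insert r P₁)) ∧
    (IsSUSP ({![3, 2]} : Finset (Fin 2 → Fin 3)) ∧
      IsSUSP ({![1, 2], ![2, 3]} : Finset (Fin 2 → Fin 3)) ∧
      ({![3, 2]} : Finset (Fin 2 → Fin 3)).card <
        ({![1, 2], ![2, 3]} : Finset (Fin 2 → Fin 3)).card ∧
      ∀ r ∈ ({![1, 2], ![2, 3]} : Finset (Fin 2 → Fin 3)) \
            ({![3, 2]} : Finset (Fin 2 → Fin 3)),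
        ¬ IsSUSP (insert r ({![3, 2]} : Finset (Fin 2 → Fin 3)))) := by
  have h2 : (IsSUSP ({![3, 2]} : Finset (Fin 2 → Fin 3)) ∧
      IsSUSP ({![1, 2], ![2, 3]} : Finset (Fin 2 → Fin 3)) ∧
      ({![3, 2]} : Finset (Fin 2 → Fin 3)).card <
        ({![1, 2], ![2, 3]} : Finset (Fin 2 → Fin 3)).card ∧
      ∀ r ∈ ({![1, 2], ![2, 3]} : Finset (Fin 2 → Fin 3)) \
            ({![3, 2]} : Finset (Fin 2 → Fin 3)),
        ¬ IsSUSP (insert r ({![3, 2]} : Finset (Fin 2 → Fin 3)))) := by decide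
  exact ⟨⟨2, _, _, h2.1, h2.2.1, h2.2.2.1, h2.2.2.2⟩, h2⟩
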